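/- arXiv:2205.15664 — 4 statements merged into one kernel-verified Lean document; each statement's English description precedes it below -/
import Mathlib

section
/- For all vectors a, b in ℝ^N and p ≥ 2, one has (4/p²)·| |a|^((p-2)/2)·a − |b|^((p-2)/2)·b |² ≤ ⟨|a|^(p-2)·a − |b|^(p-2)·b, a − b⟩. -/
open Real

private lemma bern {r x y : ℝ} (hr : 1 ≤ r) (hy : 0 ≤ y) (hxy : y ≤ x) :
    x ^ r - y ^ r ≤ r * x ^ (r - 1) * (x - y) := by
  have hx : 0 ≤ x := hy.trans hxy
  rcases eq_or_lt_of_le hx with h0 | hxpos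
  · have hx0 : x = 0 := h0.symm
    have hy0 : y = 0 := le_antisymm (hx0 ▸ hxy) hy
    have hr0 : r ≠ 0 := by intro h; rw [h] at hr; linarith
    simp [hx0, hy0, Real.zero_rpow hr0]
  · obtain ⟨q, hq0, hyq⟩ : ∃ q, 0 ≤ q ∧ y = q * x :=
      ⟨y / x, div_nonneg hy hx, (div_mul_cancel₀ y hxpos.ne').symm⟩
    subst hyq
    have hb : 1 + r * (q - 1) ≤ q ^ r := by
      have h := one_add_mul_self_le_rpow_one_add (s := q - 1) (by linarith) hr
      rwa [show (1 : ℝ) + (q - 1) = q by ring] at h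
    have hxr : x ^ r = x ^ (r - 1) * x := by
      have h := Real.rpow_add_one hxpos.ne' (r - 1)
      rwa [sub_add_cancel] at h
    have hxrpos : 0 < x ^ (r - 1) := Real.rpow_pos_of_pos hxpos _
    rw [Real.mul_rpow hq0 hx, hxr]
    nlinarith [mul_le_mul_of_nonneg_right hb (mul_pos hxrpos hxpos).le]

private lemma key {p x y : ℝ} (hp : 2 ≤ p) (hy : 0 ≤ y) (hxy : y ≤ x) :
    (x ^ (p / 2) - y ^ (p / 2)) ^ 2 ≤
      p ^ 2 / 4 * ((x ^ (p - 1) - y ^ (p - 1)) * (x - y)) := by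
  have hx : 0 ≤ x := hy.trans hxy
  rcases eq_or_lt_of_le hx with h0 | hxpos
  · have hx0 : x = 0 := h0.symm
    have hy0 : y = 0 := le_antisymm (hx0 ▸ hxy) hy
    have h1 : p / 2 ≠ 0 := ne_of_gt (by linarith)
    have h2 : p - 1 ≠ 0 := ne_of_gt (by linarith)
    simp [hx0, hy0, Real.zero_rpow h1, Real.zero_rpow h2]
  · have hr : (1 : ℝ) ≤ p / 2 := by linarith
    have hA : 0 ≤ x ^ (p / 2) - y ^ (p / 2) :=
      sub_nonneg.2 (Real.rpow_le_rpow hy hxy (by positivity))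
    have h1 : x ^ (p / 2) - y ^ (p / 2) ≤ p / 2 * x ^ ((p - 2) / 2) * (x - y) := by
      have := bern hr hy hxy
      rwa [show p / 2 - 1 = (p - 2) / 2 by ring] at this
    have h2 : x ^ ((p - 2) / 2) * x ^ (p / 2) = x ^ (p - 1) := by
      rw [← Real.rpow_add hxpos]; congr 1; ring
    have hp0 : (0 : ℝ) < p := by linarith
    have hamgm : x ^ (p - 2) * y ≤
        (p - 2) / p * x ^ (p - 1) + 2 / p * (x ^ ((p - 2) / 2) * y ^ (p / 2)) := by
      have hw1 : (0 : ℝ) ≤ (p - 2) / p := div_nonneg (by linarith) (by linarith)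
      have hw2 : (0 : ℝ) ≤ 2 / p := by positivity
      have hp1 : (0 : ℝ) ≤ x ^ (p - 1) := Real.rpow_nonneg hx _
      have hp2 : (0 : ℝ) ≤ x ^ ((p - 2) / 2) * y ^ (p / 2) :=
        mul_nonneg (Real.rpow_nonneg hx _) (Real.rpow_nonneg hy _)
      have hw : (p - 2) / p + 2 / p = 1 := by field_simp; ring
      have hgm := Real.geom_mean_le_arith_mean2_weighted hw1 hw2 hp1 hp2 hw
      have e : (x ^ (p - 1)) ^ ((p - 2) / p) * (x ^ ((p - 2) / 2) * y ^ (p / 2)) ^ (2 / p)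
          = x ^ (p - 2) * y := by
        rw [Real.mul_rpow (Real.rpow_nonneg hx _) (Real.rpow_nonneg hy _),
          ← Real.rpow_mul hx, ← Real.rpow_mul hx, ← Real.rpow_mul hy,
          show p / 2 * (2 / p) = 1 by field_simp, Real.rpow_one,
          ← mul_assoc, ← Real.rpow_add hxpos,
          show (p - 1) * ((p - 2) / p) + (p - 2) / 2 * (2 / p) = p - 2 by
            field_simp; ring]
      rwa [e] at hgm
    have hamgm2 : p / 2 * (x ^ (p - 2) * y) ≤
        (p - 2) / 2 * x ^ (p - 1) + x ^ ((p - 2) / 2) * y ^ (p / 2) := by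
      have h := mul_le_mul_of_nonneg_left hamgm (by positivity : (0 : ℝ) ≤ p / 2)
      have e1 : p / 2 * ((p - 2) / p * x ^ (p - 1) +
          2 / p * (x ^ ((p - 2) / 2) * y ^ (p / 2))) =
          (p - 2) / 2 * x ^ (p - 1) + x ^ ((p - 2) / 2) * y ^ (p / 2) := by
        field_simp
      rw [e1] at h
      exact h
    have h5 : y ^ (p - 1) ≤ x ^ (p - 2) * y := by
      have e : y ^ (p - 1) = y ^ (p - 2) * y := by
        rw [show p - 1 = p - 2 + 1 by ring,
          Real.rpow_add' hy (by intro h; nlinarith), Real.rpow_one]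
      rw [e]
      exact mul_le_mul_of_nonneg_right (Real.rpow_le_rpow hy hxy (by linarith)) hy
    have h5' := mul_le_mul_of_nonneg_left h5 (by positivity : (0 : ℝ) ≤ p / 2)
    have h6 : x ^ ((p - 2) / 2) * (x ^ (p / 2) - y ^ (p / 2)) ≤
        p / 2 * (x ^ (p - 1) - y ^ (p - 1)) := by
      rw [mul_sub, h2]
      linarith [hamgm2, h5']
    have hxy' : 0 ≤ x - y := sub_nonneg.2 hxy
    have h7 : (x ^ (p / 2) - y ^ (p / 2)) ^ 2 ≤
        p / 2 * (x - y) * (x ^ ((p - 2) / 2) * (x ^ (p / 2) - y ^ (p / 2))) := by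
      nlinarith [mul_le_mul_of_nonneg_right h1 hA]
    have h8 : p / 2 * (x - y) * (x ^ ((p - 2) / 2) * (x ^ (p / 2) - y ^ (p / 2))) ≤
        p / 2 * (x - y) * (p / 2 * (x ^ (p - 1) - y ^ (p - 1))) :=
      mul_le_mul_of_nonneg_left h6 (by positivity)
    nlinarith [h7, h8]

private lemma main_scalar {p α β t : ℝ} (hp : 2 ≤ p) (hβ : 0 ≤ β) (hβα : β ≤ α)
    (ht : t ≤ α * β) :
    4 / p ^ 2 * (α ^ p + β ^ p - 2 * (α ^ ((p - 2) / 2) * β ^ ((p - 2) / 2)) * t) ≤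
      α ^ p + β ^ p - (α ^ (p - 2) + β ^ (p - 2)) * t := by
  have hα : 0 ≤ α := hβ.trans hβα
  have hp0 : (0 : ℝ) < p := by linarith
  have hp2 : (0 : ℝ) < p ^ 2 := by positivity
  have hsqα : (α ^ ((p - 2) / 2)) ^ 2 = α ^ (p - 2) := by
    rw [← Real.rpow_natCast (α ^ ((p - 2) / 2)) 2, ← Real.rpow_mul hα]
    norm_num
  have hsqβ : (β ^ ((p - 2) / 2)) ^ 2 = β ^ (p - 2) := by
    rw [← Real.rpow_natCast (β ^ ((p - 2) / 2)) 2, ← Real.rpow_mul hβ]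
    norm_num
  have hsqαp : (α ^ (p / 2)) ^ 2 = α ^ p := by
    rw [← Real.rpow_natCast (α ^ (p / 2)) 2, ← Real.rpow_mul hα]
    norm_num
  have hsqβp : (β ^ (p / 2)) ^ 2 = β ^ p := by
    rw [← Real.rpow_natCast (β ^ (p / 2)) 2, ← Real.rpow_mul hβ]
    norm_num
  have hαh : α ^ ((p - 2) / 2) * α = α ^ (p / 2) := by
    rw [show p / 2 = (p - 2) / 2 + 1 by ring,
      Real.rpow_add' hα (by intro h; nlinarith), Real.rpow_one]
  have hβh : β ^ ((p - 2) / 2) * β = β ^ (p / 2) := by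
    rw [show p / 2 = (p - 2) / 2 + 1 by ring,
      Real.rpow_add' hβ (by intro h; nlinarith), Real.rpow_one]
  have hα1 : α ^ (p - 2) * α = α ^ (p - 1) := by
    rw [show p - 1 = p - 2 + 1 by ring,
      Real.rpow_add' hα (by intro h; nlinarith), Real.rpow_one]
  have hβ1 : β ^ (p - 2) * β = β ^ (p - 1) := by
    rw [show p - 1 = p - 2 + 1 by ring,
      Real.rpow_add' hβ (by intro h; nlinarith), Real.rpow_one]
  have hαp : α ^ (p - 1) * α = α ^ p := by
    have h := Real.rpow_add' hα (by intro h; nlinarith : p - 1 + 1 ≠ 0)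
      (y := p - 1) (z := 1)
    rw [Real.rpow_one, show p - 1 + 1 = p by ring] at h
    exact h.symm
  have hβp : β ^ (p - 1) * β = β ^ p := by
    have h := Real.rpow_add' hβ (by intro h; nlinarith : p - 1 + 1 ≠ 0)
      (y := p - 1) (z := 1)
    rw [Real.rpow_one, show p - 1 + 1 = p by ring] at h
    exact h.symm
  have hkey := key hp hβ hβα
  have hval : 4 / p ^ 2 * (α ^ p + β ^ p -
        2 * (α ^ ((p - 2) / 2) * β ^ ((p - 2) / 2)) * (α * β)) ≤
      α ^ p + β ^ p - (α ^ (p - 2) + β ^ (p - 2)) * (α * β) := by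
    have e1 : α ^ p + β ^ p - (α ^ (p - 2) + β ^ (p - 2)) * (α * β) =
        (α ^ (p - 1) - β ^ (p - 1)) * (α - β) := by
      rw [← hαp, ← hβp, ← hα1, ← hβ1]; ring
    have e2 : α ^ p + β ^ p -
        2 * (α ^ ((p - 2) / 2) * β ^ ((p - 2) / 2)) * (α * β) =
        (α ^ (p / 2) - β ^ (p / 2)) ^ 2 := by
      rw [← hsqαp, ← hsqβp, ← hαh, ← hβh]; ring
    rw [e1, e2]
    calc 4 / p ^ 2 * (α ^ (p / 2) - β ^ (p / 2)) ^ 2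
        ≤ 4 / p ^ 2 * (p ^ 2 / 4 * ((α ^ (p - 1) - β ^ (p - 1)) * (α - β))) :=
          mul_le_mul_of_nonneg_left hkey (by positivity)
      _ = (α ^ (p - 1) - β ^ (p - 1)) * (α - β) := by field_simp
  have hg : 0 ≤ α ^ ((p - 2) / 2) * β ^ ((p - 2) / 2) :=
    mul_nonneg (Real.rpow_nonneg hα _) (Real.rpow_nonneg hβ _)
  have hcoef : 2 * (α ^ ((p - 2) / 2) * β ^ ((p - 2) / 2)) ≤
      α ^ (p - 2) + β ^ (p - 2) := by
    have h := two_mul_le_add_sq (α ^ ((p - 2) / 2)) (β ^ ((p - 2) / 2))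
    rw [hsqα, hsqβ] at h
    linarith [h]
  have h8 : 8 / p ^ 2 ≤ 2 := by
    rw [div_le_iff₀ hp2]; nlinarith
  have hc : 0 ≤ α ^ (p - 2) + β ^ (p - 2) -
      8 / p ^ 2 * (α ^ ((p - 2) / 2) * β ^ ((p - 2) / 2)) := by
    have h9 := mul_le_mul_of_nonneg_right h8 hg
    linarith [h9, hcoef]
  have htt : 0 ≤ α * β - t := sub_nonneg.2 ht
  have key2 : α ^ p + β ^ p - (α ^ (p - 2) + β ^ (p - 2)) * t -
      4 / p ^ 2 * (α ^ p + β ^ p - 2 * (α ^ ((p - 2) / 2) * β ^ ((p - 2) / 2)) * t) =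
      (α ^ p + β ^ p - (α ^ (p - 2) + β ^ (p - 2)) * (α * β) -
        4 / p ^ 2 * (α ^ p + β ^ p -
          2 * (α ^ ((p - 2) / 2) * β ^ ((p - 2) / 2)) * (α * β))) +
      (α ^ (p - 2) + β ^ (p - 2) -
        8 / p ^ 2 * (α ^ ((p - 2) / 2) * β ^ ((p - 2) / 2))) * (α * β - t) := by
    ring
  linarith [hval, mul_nonneg hc htt, key2]

private lemma stmt_aux (N : ℕ) (p : ℝ) (hp : 2 ≤ p) (a b : EuclideanSpace ℝ (Fin N))
    (hba : ‖b‖ ≤ ‖a‖) :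
    (4 / p ^ 2) * ‖‖a‖ ^ ((p - 2) / 2) • a - ‖b‖ ^ ((p - 2) / 2) • b‖ ^ 2 ≤
      (inner ℝ (‖a‖ ^ (p - 2) • a - ‖b‖ ^ (p - 2) • b) (a - b) : ℝ) := by
  have hα : (0 : ℝ) ≤ ‖a‖ := norm_nonneg a
  have hβ : (0 : ℝ) ≤ ‖b‖ := norm_nonneg b
  have ht : (inner ℝ a b : ℝ) ≤ ‖a‖ * ‖b‖ := real_inner_le_norm a b
  have hu : (0 : ℝ) ≤ ‖a‖ ^ ((p - 2) / 2) := Real.rpow_nonneg hα _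
  have hv : (0 : ℝ) ≤ ‖b‖ ^ ((p - 2) / 2) := Real.rpow_nonneg hβ _
  have hαp2 : ‖a‖ ^ (p - 2) * ‖a‖ ^ 2 = ‖a‖ ^ p := by
    rw [← Real.rpow_two, ← Real.rpow_add' hα (by intro h; nlinarith)]
    congr 1; ring
  have hβp2 : ‖b‖ ^ (p - 2) * ‖b‖ ^ 2 = ‖b‖ ^ p := by
    rw [← Real.rpow_two, ← Real.rpow_add' hβ (by intro h; nlinarith)]
    congr 1; ring
  have hsqα : (‖a‖ ^ ((p - 2) / 2)) ^ 2 = ‖a‖ ^ (p - 2) := by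
    rw [← Real.rpow_natCast (‖a‖ ^ ((p - 2) / 2)) 2, ← Real.rpow_mul hα]
    norm_num
  have hsqβ : (‖b‖ ^ ((p - 2) / 2)) ^ 2 = ‖b‖ ^ (p - 2) := by
    rw [← Real.rpow_natCast (‖b‖ ^ ((p - 2) / 2)) 2, ← Real.rpow_mul hβ]
    norm_num
  have hR : (inner ℝ (‖a‖ ^ (p - 2) • a - ‖b‖ ^ (p - 2) • b) (a - b) : ℝ) =
      ‖a‖ ^ (p - 2) * ‖a‖ ^ 2 + ‖b‖ ^ (p - 2) * ‖b‖ ^ 2 -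
        (‖a‖ ^ (p - 2) + ‖b‖ ^ (p - 2)) * (inner ℝ a b : ℝ) := by
    simp only [inner_sub_left, inner_sub_right, real_inner_smul_left,
      real_inner_self_eq_norm_sq, real_inner_comm b a]
    ring
  have hL : ‖‖a‖ ^ ((p - 2) / 2) • a - ‖b‖ ^ ((p - 2) / 2) • b‖ ^ 2 =
      (‖a‖ ^ ((p - 2) / 2)) ^ 2 * ‖a‖ ^ 2 + (‖b‖ ^ ((p - 2) / 2)) ^ 2 * ‖b‖ ^ 2 -
        2 * (‖a‖ ^ ((p - 2) / 2) * ‖b‖ ^ ((p - 2) / 2)) * (inner ℝ a b : ℝ) := by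
    rw [norm_sub_sq_real]
    rw [norm_smul, norm_smul, real_inner_smul_left, real_inner_smul_right]
    simp only [Real.norm_eq_abs, abs_of_nonneg hu, abs_of_nonneg hv]
    ring
  rw [hR, hL, hsqα, hsqβ, hαp2, hβp2]
  exact main_scalar hp hβ hba ht

theorem stmt_0 (N : ℕ) (p : ℝ) (hp : 2 ≤ p) (a b : EuclideanSpace ℝ (Fin N)) :
    (4 / p ^ 2) * ‖‖a‖ ^ ((p - 2) / 2) • a - ‖b‖ ^ ((p - 2) / 2) • b‖ ^ 2 ≤
      (inner ℝ (‖a‖ ^ (p - 2) • a - ‖b‖ ^ (p - 2) • b) (a - b) : ℝ) := by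
  rcases le_total ‖b‖ ‖a‖ with h | h
  · exact stmt_aux N p hp a b h
  · have h2 := stmt_aux N p hp b a h
    rw [norm_sub_rev] at h2
    rwa [← neg_sub (‖a‖ ^ (p - 2) • a) (‖b‖ ^ (p - 2) • b), ← neg_sub a b,
      inner_neg_neg] at h2
end

section
/- If u : [0,T] → ℝ is continuously differentiable and 0 < α < 1, then the Caputo fractional derivative satisfies (1/2)·D^α(u²)(t) ≤ u(t)·D^α u(t) for all t ∈ (0,T], where D^α u(t) = (1/Γ(1−α))·∫₀ᵗ (t−s)^(−α) u'(s) ds. -/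
/-- The left Caputo fractional derivative of order `α`. -/
noncomputable def caputo (α : ℝ) (u : ℝ → ℝ) (t : ℝ) : ℝ :=
  (1 / Real.Gamma (1 - α)) * ∫ s in (0:ℝ)..t, (t - s) ^ (-α) * deriv u s

open Set MeasureTheory intervalIntegral


section aux

variable {t T α : ℝ}

lemma kernel_intble (hα1 : α < 1) :
    IntervalIntegrable (fun s : ℝ => (t - s) ^ (-α)) volume 0 t := by
  have h : IntervalIntegrable (fun x : ℝ => x ^ (-α)) volume 0 t :=
    intervalIntegral.intervalIntegrable_rpow' (by linarith)
  have h2 := h.comp_sub_left t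
  simpa using h2.symm

lemma prod_intble (ht0 : 0 < t) (htT : t ≤ T) (hα1 : α < 1)
    (w : ℝ → ℝ) (hw : ContinuousOn w (Set.Icc 0 T)) :
    IntervalIntegrable (fun s : ℝ => (t - s) ^ (-α) * w s) volume 0 t := by
  obtain ⟨C, hC⟩ := (isCompact_Icc : IsCompact (Set.Icc (0:ℝ) T)).exists_bound_of_continuousOn hw
  have hk := kernel_intble (t := t) (α := α) hα1
  rw [intervalIntegrable_iff, uIoc_of_le ht0.le] at hk ⊢
  have hrestr : volume.restrict (Set.Ioc (0:ℝ) t) = volume.restrict (Set.Ioo (0:ℝ) t) :=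
    (Measure.restrict_congr_set Ioo_ae_eq_Ioc.symm)
  have hmeas : AEStronglyMeasurable (fun s : ℝ => (t - s) ^ (-α) * w s)
      (volume.restrict (Set.Ioc 0 t)) := by
    rw [hrestr]
    apply ContinuousOn.aestronglyMeasurable _ measurableSet_Ioo
    apply ContinuousOn.mul
    · apply ContinuousOn.rpow_const
      · exact (continuous_const.sub continuous_id).continuousOn
      · intro s hs
        left
        have : s < t := hs.2
        intro h
        linarith [sub_eq_zero.mp h]
    · exact hw.mono (fun s hs => ⟨hs.1.le, hs.2.le.trans htT⟩)
  refine (hk.const_mul C).mono' hmeas ?_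
  rw [ae_restrict_iff' measurableSet_Ioc]
  filter_upwards with s hs
  have hts : 0 ≤ t - s := by linarith [hs.2]
  have hk0 : 0 ≤ (t - s) ^ (-α) := Real.rpow_nonneg hts _
  have hCs := hC s ⟨hs.1.le, hs.2.trans htT⟩
  rw [Real.norm_eq_abs] at hCs ⊢
  rw [abs_mul, abs_of_nonneg hk0, mul_comm C]
  exact mul_le_mul_of_nonneg_left hCs hk0

end aux

lemma key_nonneg (ht0 : 0 < t) (htT : t ≤ T) (hα0 : 0 < α) (hα1 : α < 1)
    {u f : ℝ → ℝ} (hder : ∀ s ∈ Set.Ioo (0:ℝ) T, HasDerivAt u (f s) s)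
    (hfc : ContinuousOn f (Set.Icc 0 T)) (huc : ContinuousOn u (Set.Icc 0 T))
    {M : ℝ} (hM0 : 0 ≤ M)
    (hlip : ∀ y ∈ Set.Icc (0:ℝ) T, |u t - u y| ≤ M * |t - y|) :
    0 ≤ ∫ s in (0:ℝ)..t, (t - s) ^ (-α : ℝ) * ((u t - u s) * f s) := by
  set k : ℝ → ℝ := fun s => (t - s) ^ (-α : ℝ) with hk
  set g : ℝ → ℝ := fun s => (u t - u s) ^ 2 with hg
  set G : ℝ → ℝ := fun s => -(2 * ((u t - u s) * f s)) with hG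
  have htIcc : t ∈ Set.Icc (0:ℝ) T := ⟨ht0.le, htT⟩
  -- derivative of g
  have hgder : ∀ s ∈ Set.Ioo (0:ℝ) T, HasDerivAt g (G s) s := by
    intro s hs
    have h1 : HasDerivAt (fun x => u t - u x) (-f s) s := by
      have := (hasDerivAt_const s (u t)).sub (hder s hs); rw [zero_sub] at this; exact this
    have h2 : HasDerivAt (fun x => (u t - u x) ^ 2) (((2:ℕ):ℝ) * (u t - u s) ^ (2 - 1) * -f s) s :=
      h1.fun_pow 2
    convert h2 using 1
    simp [hG]
    ring
  -- continuity of G on Icc 0 T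
  have hGc : ContinuousOn G (Set.Icc 0 T) := by
    apply ContinuousOn.neg
    exact (continuousOn_const.mul ((continuousOn_const.sub huc).mul hfc))
  have hgc : ContinuousOn g (Set.Icc 0 T) := (continuousOn_const.sub huc).pow 2
  have hg0 : ∀ s, 0 ≤ g s := fun s => sq_nonneg _
  -- integrability of k * G on [0, t]
  have hint : IntervalIntegrable (fun s => k s * G s) volume 0 t :=
    prod_intble ht0 htT hα1 G hGc
  -- the primitive
  set P : ℝ → ℝ := fun x => ∫ s in (0:ℝ)..x, k s * G s with hP
  have hPc : ContinuousOn P (Set.Icc 0 t) := by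
    have := intervalIntegral.continuousOn_primitive_interval'
      (μ := volume) (b₁ := (0:ℝ)) (b₂ := t) hint Set.left_mem_uIcc
    simpa [Set.uIcc_of_le ht0.le] using this
  -- main bound for b in (0, t)
  have claim : ∀ b ∈ Set.Ioo (0:ℝ) t, P b ≤ M ^ 2 * (t - b) ^ (2 - α) := by
    intro b hb
    -- IBP bound on [a, b]
    have step : ∀ a ∈ Set.Ioo (0:ℝ) b, (∫ s in a..b, k s * G s) ≤ k b * g b := by
      intro a ha
      have hab : a ≤ b := ha.2.le
      have hsub : Set.uIcc a b ⊆ Set.Ioo 0 t := by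
        rw [Set.uIcc_of_le hab]
        intro x hx
        exact ⟨lt_of_lt_of_le ha.1 hx.1, lt_of_le_of_lt hx.2 hb.2⟩
      have hsubT : Set.uIcc a b ⊆ Set.Icc 0 T := fun x hx =>
        ⟨(hsub hx).1.le, ((hsub hx).2.le.trans htT)⟩
      set k' : ℝ → ℝ := fun s => α * (t - s) ^ (-α - 1) with hk'
      have hkder : ∀ x ∈ Set.uIcc a b, HasDerivAt k (k' x) x := by
        intro x hx
        have hxt : x < t := (hsub hx).2
        have h1 : HasDerivAt (fun s : ℝ => t - s) (-1) x := by
          have := (hasDerivAt_const x t).sub (hasDerivAt_id x); rw [zero_sub] at this; exact this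
        have h2 := h1.rpow_const (p := (-α : ℝ)) (Or.inl (sub_ne_zero.2 hxt.ne'))
        convert h2 using 1
        ring
      have hgd : ∀ x ∈ Set.uIcc a b, HasDerivAt g (G x) x := fun x hx =>
        hgder x ⟨(hsub hx).1, (hsub hx).2.trans_le htT⟩
      have hkc : ContinuousOn k (Set.uIcc a b) := by
        apply ContinuousOn.rpow_const (continuous_const.sub continuous_id).continuousOn
        intro x hx
        left
        have := (hsub hx).2
        intro h; rw [Pi.sub_apply, sub_eq_zero] at h; exact absurd h.symm (ne_of_lt this)
      have hk'c : ContinuousOn k' (Set.uIcc a b) := by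
        apply ContinuousOn.mul continuousOn_const
        apply ContinuousOn.rpow_const (continuous_const.sub continuous_id).continuousOn
        intro x hx
        left
        have := (hsub hx).2
        intro h; rw [Pi.sub_apply, sub_eq_zero] at h; exact absurd h.symm (ne_of_lt this)
      have hk'int : IntervalIntegrable k' volume a b := hk'c.intervalIntegrable
      have hGint : IntervalIntegrable G volume a b := (hGc.mono hsubT).intervalIntegrable
      have hibp := intervalIntegral.integral_mul_deriv_eq_deriv_mul hkder hgd hk'int hGint
      rw [hibp]
      have h1 : 0 ≤ k a * g a := by
        apply mul_nonneg _ (hg0 a)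
        apply Real.rpow_nonneg
        have : a < t := (hsub (Set.left_mem_uIcc)).2
        linarith
      have h2 : 0 ≤ ∫ s in a..b, k' s * g s := by
        apply intervalIntegral.integral_nonneg hab
        intro s hs
        apply mul_nonneg _ (hg0 s)
        apply mul_nonneg hα0.le
        apply Real.rpow_nonneg
        have : s < t := (hsub (by rw [Set.uIcc_of_le hab]; exact hs)).2
        linarith
      linarith
    -- take a → 0+
    have hPb : P b ≤ k b * g b := by
      have hblim : Filter.Tendsto P (nhdsWithin 0 (Set.Ioo 0 b)) (nhds (P 0)) := by
        apply Filter.Tendsto.mono_left ((hPc 0 ⟨le_rfl, ht0.le⟩).tendsto)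
        apply nhdsWithin_mono
        intro x hx
        exact ⟨hx.1.le, hx.2.le.trans hb.2.le⟩
      have hP0 : P 0 = 0 := intervalIntegral.integral_same
      have hne : (nhdsWithin (0:ℝ) (Set.Ioo 0 b)).NeBot := by
        apply mem_closure_iff_nhdsWithin_neBot.1
        rw [closure_Ioo (ne_of_lt hb.1)]
        exact ⟨le_rfl, hb.1.le⟩
      have hdiff : ∀ a ∈ Set.Ioo (0:ℝ) b, P b - P a = ∫ s in a..b, k s * G s := by
        intro a ha
        have h1 : IntervalIntegrable (fun s => k s * G s) volume 0 a :=
          hint.mono_set (by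
            rw [Set.uIcc_of_le ht0.le, Set.uIcc_of_le ha.1.le]
            exact Set.Icc_subset_Icc le_rfl (ha.2.le.trans hb.2.le))
        have h2 : IntervalIntegrable (fun s => k s * G s) volume a b :=
          hint.mono_set (by
            rw [Set.uIcc_of_le ht0.le, Set.uIcc_of_le ha.2.le]
            exact Set.Icc_subset_Icc ha.1.le hb.2.le)
        rw [hP]
        simp only
        rw [← intervalIntegral.integral_add_adjacent_intervals h1 h2]
        ring
      have hten : Filter.Tendsto (fun a => P b - P a) (nhdsWithin 0 (Set.Ioo 0 b))
          (nhds (P b)) := by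
        have := (tendsto_const_nhds (x := P b)).sub hblim
        rw [hP0, sub_zero] at this
        exact this
      apply le_of_tendsto hten
      filter_upwards [self_mem_nhdsWithin] with a ha
      rw [hdiff a ha]
      exact step a ha
    -- bound k b * g b
    have htb : 0 < t - b := by linarith [hb.2]
    have hub : |u t - u b| ≤ M * (t - b) := by
      have := hlip b ⟨hb.1.le, hb.2.le.trans htT⟩
      rwa [abs_of_pos htb] at this
    have hgb : g b ≤ M ^ 2 * (t - b) ^ (2:ℕ) := by
      rw [hg]
      simp only
      calc (u t - u b) ^ 2 = |u t - u b| ^ 2 := (sq_abs _).symm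
        _ ≤ (M * (t - b)) ^ 2 := by
            apply pow_le_pow_left₀ (abs_nonneg _) hub
        _ = M ^ 2 * (t - b) ^ 2 := by ring
    have hkb : (0:ℝ) ≤ k b := Real.rpow_nonneg (by linarith) _
    calc P b ≤ k b * g b := hPb
      _ ≤ k b * (M ^ 2 * (t - b) ^ (2:ℕ)) := mul_le_mul_of_nonneg_left hgb hkb
      _ = M ^ 2 * ((t - b) ^ (-α) * (t - b) ^ (2:ℝ)) := by
          rw [← Real.rpow_natCast (t - b) 2]
          push_cast
          ring
      _ = M ^ 2 * (t - b) ^ (2 - α) := by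
          rw [← Real.rpow_add htb]
          ring_nf
  -- take b → t-
  have hPt : P t ≤ 0 := by
    have hne : (nhdsWithin t (Set.Ioo 0 t)).NeBot := by
      apply mem_closure_iff_nhdsWithin_neBot.1
      rw [closure_Ioo (ne_of_lt ht0)]
      exact ⟨ht0.le, le_rfl⟩
    have h1 : Filter.Tendsto P (nhdsWithin t (Set.Ioo 0 t)) (nhds (P t)) := by
      apply Filter.Tendsto.mono_left ((hPc t ⟨ht0.le, le_rfl⟩).tendsto)
      apply nhdsWithin_mono
      intro x hx
      exact ⟨hx.1.le, hx.2.le⟩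
    have h2 : Filter.Tendsto (fun b => M ^ 2 * (t - b) ^ (2 - α))
        (nhdsWithin t (Set.Ioo 0 t)) (nhds 0) := by
      have ha : Filter.Tendsto (fun b : ℝ => t - b) (nhdsWithin t (Set.Ioo 0 t)) (nhds 0) := by
        have h0 : Filter.Tendsto (fun b : ℝ => t - b) (nhds t) (nhds (t - t)) :=
          (continuous_const.sub continuous_id).tendsto t
        rw [sub_self] at h0
        exact h0.mono_left nhdsWithin_le_nhds
      have hc : ContinuousAt (fun x : ℝ => x ^ (2 - α)) 0 :=
        Real.continuousAt_rpow_const 0 (2 - α) (Or.inr (by linarith))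
      have := (hc.tendsto.comp ha).const_mul (M ^ 2)
      rw [Real.zero_rpow (sub_ne_zero.2 (by linarith))] at this
      simpa using this
    refine le_of_tendsto_of_tendsto h1 h2 ?_
    filter_upwards [self_mem_nhdsWithin] with b hb
    exact claim b hb
  -- conclude
  have heq : (∫ s in (0:ℝ)..t, (t - s) ^ (-α) * ((u t - u s) * f s))
      = (-(1:ℝ)/2) * P t := by
    rw [hP]
    simp only
    rw [← intervalIntegral.integral_const_mul]
    apply intervalIntegral.integral_congr
    intro s hs
    simp only [hG, hk]
    ring
  rw [heq]
  nlinarith [hPt]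


theorem stmt_4 (T α : ℝ) (hT : 0 < T) (hα0 : 0 < α) (hα1 : α < 1)
    (u : ℝ → ℝ) (hu : ContDiffOn ℝ 1 u (Set.Icc 0 T)) :
    ∀ t ∈ Set.Ioc (0:ℝ) T,
      (1 / 2) * caputo α (fun s => u s ^ 2) t ≤ u t * caputo α u t := by
  intro t ht
  obtain ⟨ht0, htT⟩ := ht
  set f : ℝ → ℝ := derivWithin u (Set.Icc 0 T) with hf
  have hud : DifferentiableOn ℝ u (Set.Icc 0 T) := hu.differentiableOn one_ne_zero
  have hfc : ContinuousOn f (Set.Icc 0 T) :=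
    hu.continuousOn_derivWithin (uniqueDiffOn_Icc hT) le_rfl
  have huc : ContinuousOn u (Set.Icc 0 T) := hu.continuousOn
  obtain ⟨M, hM⟩ := (isCompact_Icc :
    IsCompact (Set.Icc (0:ℝ) T)).exists_bound_of_continuousOn hfc
  have hM0 : 0 ≤ M := le_trans (norm_nonneg _) (hM 0 ⟨le_rfl, hT.le⟩)
  have hder : ∀ s ∈ Set.Ioo (0:ℝ) T, HasDerivAt u (f s) s := by
    intro s hs
    have hnhds : Set.Icc (0:ℝ) T ∈ nhds s := Icc_mem_nhds hs.1 hs.2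
    have hd : DifferentiableAt ℝ u s :=
      (hud s (Set.Ioo_subset_Icc_self hs)).differentiableAt hnhds
    have : f s = deriv u s := by
      rw [hf, derivWithin_of_mem_nhds hnhds]
    rw [this]
    exact hd.hasDerivAt
  have hlip : ∀ y ∈ Set.Icc (0:ℝ) T, |u t - u y| ≤ M * |t - y| := by
    intro y hy
    have := Convex.norm_image_sub_le_of_norm_derivWithin_le hud
      (fun x hx => hM x hx) (convex_Icc 0 T) hy ⟨ht0.le, htT⟩
    simpa [Real.norm_eq_abs] using this
  -- a.e. equality of s ≠ t on the interval
  have hne : ∀ᵐ s : ℝ, s ≠ t := by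
    rw [MeasureTheory.ae_iff]
    have : {s : ℝ | ¬ s ≠ t} = {t} := by ext s; simp
    rw [this]
    exact Real.volume_singleton
  have hmem : ∀ s, s ∈ Set.uIoc (0:ℝ) t → s ≠ t → s ∈ Set.Ioo (0:ℝ) T := by
    intro s hs hst
    rw [Set.uIoc_of_le ht0.le] at hs
    exact ⟨hs.1, lt_of_lt_of_le (lt_of_le_of_ne hs.2 hst) htT⟩
  have hΓ : 0 < Real.Gamma (1 - α) := Real.Gamma_pos_of_pos (by linarith)
  -- rewrite caputo of u²
  have eqA : (∫ s in (0:ℝ)..t, (t - s) ^ (-α) * deriv (fun x => u x ^ 2) s)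
      = ∫ s in (0:ℝ)..t, (t - s) ^ (-α : ℝ) * (2 * (u s * f s)) := by
    apply intervalIntegral.integral_congr_ae
    filter_upwards [hne] with s hst hs
    have hsIoo := hmem s hs hst
    have hd := hder s hsIoo
    have : deriv (fun x => u x ^ 2) s = 2 * u s ^ 1 * f s := by
      have := hd.fun_pow 2
      simpa using this.deriv
    rw [this]
    ring
  have eqB : (∫ s in (0:ℝ)..t, (t - s) ^ (-α) * deriv u s)
      = ∫ s in (0:ℝ)..t, (t - s) ^ (-α : ℝ) * f s := by
    apply intervalIntegral.integral_congr_ae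
    filter_upwards [hne] with s hst hs
    have hd := hder s (hmem s hs hst)
    rw [hd.deriv]
  rw [caputo, caputo, eqA, eqB]
  have hc : (0:ℝ) ≤ 1 / Real.Gamma (1 - α) := by positivity
  -- reduce to integral inequality
  have hw1 : ContinuousOn (fun s => 2 * (u s * f s)) (Set.Icc 0 T) :=
    continuousOn_const.mul (huc.mul hfc)
  have hw2 : ContinuousOn (fun s => u t * f s) (Set.Icc 0 T) :=
    continuousOn_const.mul hfc
  have hi1 : IntervalIntegrable (fun s => (t - s) ^ (-α : ℝ) * (2 * (u s * f s))) volume 0 t :=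
    prod_intble ht0 htT hα1 _ hw1
  have hi2 : IntervalIntegrable (fun s => (t - s) ^ (-α : ℝ) * (u t * f s)) volume 0 t :=
    prod_intble ht0 htT hα1 _ hw2
  have hkey : 0 ≤ ∫ s in (0:ℝ)..t, (t - s) ^ (-α : ℝ) * ((u t - u s) * f s) :=
    key_nonneg ht0 htT hα0 hα1 hder hfc huc hM0 hlip
  have hsplit : (∫ s in (0:ℝ)..t, (t - s) ^ (-α : ℝ) * ((u t - u s) * f s))
      = (∫ s in (0:ℝ)..t, (t - s) ^ (-α : ℝ) * (u t * f s))
        - (1/2) * ∫ s in (0:ℝ)..t, (t - s) ^ (-α : ℝ) * (2 * (u s * f s)) := by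
    rw [← intervalIntegral.integral_const_mul, ← intervalIntegral.integral_sub hi2
      (hi1.const_mul (1/2))]
    apply intervalIntegral.integral_congr
    intro s hs
    simp only
    ring
  have hineq : (1/2) * (∫ s in (0:ℝ)..t, (t - s) ^ (-α : ℝ) * (2 * (u s * f s)))
      ≤ ∫ s in (0:ℝ)..t, (t - s) ^ (-α : ℝ) * (u t * f s) := by linarith [hsplit ▸ hkey]
  have huB : u t * ((1 / Real.Gamma (1 - α)) * ∫ s in (0:ℝ)..t, (t - s) ^ (-α : ℝ) * f s)
      = (1 / Real.Gamma (1 - α)) * ∫ s in (0:ℝ)..t, (t - s) ^ (-α : ℝ) * (u t * f s) := by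
    calc u t * ((1 / Real.Gamma (1 - α)) * ∫ s in (0:ℝ)..t, (t - s) ^ (-α : ℝ) * f s)
        = (1 / Real.Gamma (1 - α)) *
          ∫ s in (0:ℝ)..t, u t * ((t - s) ^ (-α : ℝ) * f s) := by
          rw [intervalIntegral.integral_const_mul]; ring
      _ = (1 / Real.Gamma (1 - α)) *
          ∫ s in (0:ℝ)..t, (t - s) ^ (-α : ℝ) * (u t * f s) := by
          rw [intervalIntegral.integral_congr (g := fun s => (t - s) ^ (-α : ℝ) * (u t * f s))
            (fun s _ => by ring)]
  rw [huB]
  calc (1/2) * ((1 / Real.Gamma (1 - α)) *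
        ∫ s in (0:ℝ)..t, (t - s) ^ (-α : ℝ) * (2 * (u s * f s)))
      = (1 / Real.Gamma (1 - α)) * ((1/2) *
        ∫ s in (0:ℝ)..t, (t - s) ^ (-α : ℝ) * (2 * (u s * f s))) := by ring
    _ ≤ (1 / Real.Gamma (1 - α)) *
        ∫ s in (0:ℝ)..t, (t - s) ^ (-α : ℝ) * (u t * f s) :=
        mul_le_mul_of_nonneg_left hineq hc
end

section
/- Gronwall inequality with Mittag-Leffler bound: let α ∈ (0,1), C ≥ 0, and Φ : [0,T] → ℝ continuous nonnegative with Φ(t) ≤ Φ(0) + (C/Γ(α))·∫₀ᵗ (t−s)^(α−1)·Φ(s) ds for all t ∈ [0,T]. Then Φ(t) ≤ Φ(0)·E_α(C·t^α) for all t ∈ [0,T], where E_α(z) = Σ_{k≥0} z^k/Γ(αk+1). -/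
set_option maxHeartbeats 1000000
open MeasureTheory


lemma gamma_lb {y : ℝ} (hy : 1 ≤ y) : (Nat.factorial (Nat.floor y) : ℝ) ≤ Real.Gamma (y + 1) := by
  have h0 : (0:ℝ) ≤ y := by linarith
  have hfl : 1 ≤ Nat.floor y := Nat.le_floor (by exact_mod_cast hy)
  have h1 : ((Nat.floor y : ℝ) + 1) ≤ y + 1 := by
    have := Nat.floor_le h0; linarith
  have h2 : (2:ℝ) ≤ (Nat.floor y : ℝ) + 1 := by
    have : (1:ℝ) ≤ (Nat.floor y : ℝ) := by exact_mod_cast hfl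
    linarith
  calc (Nat.factorial (Nat.floor y) : ℝ) = Real.Gamma ((Nat.floor y : ℝ) + 1) :=
        (Real.Gamma_nat_eq_factorial _).symm
    _ ≤ Real.Gamma (y + 1) :=
        Real.Gamma_strictMonoOn_Ici.monotoneOn h2 (by linarith : (2:ℝ) ≤ y + 1) h1

lemma ml_summable {α : ℝ} (hα : 0 < α) {x : ℝ} (hx : 0 ≤ x) :
    Summable (fun n : ℕ => x ^ n / Real.Gamma (α * n + 1)) := by
  set y : ℝ := max x 1 with hy
  have hy1 : (1:ℝ) ≤ y := le_max_right _ _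
  have hxy : x ≤ y := le_max_left _ _
  set m : ℕ := Nat.ceil (1/α) with hmdef
  have hm1 : 1 ≤ m := Nat.one_le_ceil_iff.mpr (by positivity)
  have hm0 : (0:ℝ) < m := by exact_mod_cast hm1
  have hαm : 1/α ≤ (m:ℝ) := Nat.le_ceil _
  set R : ℝ := (2*y)^m with hRdef
  have h2y : (1:ℝ) ≤ 2*y := by linarith
  have hR1 : (1:ℝ) ≤ R := one_le_pow₀ h2y
  obtain ⟨J, hJ⟩ : ∃ J : ℕ, ∀ j ≥ J, R ^ j ≤ (Nat.factorial j : ℝ) := by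
    have h := (FloorSemiring.tendsto_pow_div_factorial_atTop R).eventually
      (eventually_le_nhds (by norm_num : (0:ℝ) < 1))
    rw [Filter.eventually_atTop] at h
    obtain ⟨J, hJ⟩ := h
    refine ⟨J, fun j hj => ?_⟩
    have hfac : (0:ℝ) < (Nat.factorial j : ℝ) := by exact_mod_cast j.factorial_pos
    have := hJ j hj
    rw [div_le_one hfac] at this
    linarith [this]
  set N : ℕ := m * (J + 1) with hNdef
  have key : ∀ n, N ≤ n → x ^ n / Real.Gamma (α * n + 1) ≤ R * (1/2) ^ n := by
    intro n hn
    set j : ℕ := n / m with hjdef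
    have hjJ : J + 1 ≤ j := by
      apply (Nat.le_div_iff_mul_le (by omega : 0 < m)).mpr
      calc (J+1) * m = m * (J+1) := Nat.mul_comm _ _
        _ ≤ n := hn
    have hj1 : 1 ≤ j := by omega
    have hjn : (j:ℝ) ≤ α * n := by
      have h1 : (j:ℝ) * m ≤ (n:ℝ) := by exact_mod_cast Nat.div_mul_le_self n m
      have h2 : (j:ℝ) ≤ (n:ℝ) / m := (le_div_iff₀ hm0).mpr h1
      have h3 : (n:ℝ) / m ≤ α * n := by
        rw [div_le_iff₀ hm0]
        have h4 : (1/α) * (n:ℝ) ≤ (m:ℝ) * n :=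
          mul_le_mul_of_nonneg_right hαm (Nat.cast_nonneg n)
        have h6 : α * ((1/α) * (n:ℝ)) ≤ α * ((m:ℝ)*n) := mul_le_mul_of_nonneg_left h4 hα.le
        have h7 : α * ((1/α) * (n:ℝ)) = n := by field_simp
        linarith [h6, h7]
      linarith
    have hα1 : (1:ℝ) ≤ α * n := le_trans (by exact_mod_cast hj1) hjn
    have hfl : j ≤ Nat.floor (α * n) := Nat.le_floor (by exact_mod_cast hjn)
    have hG : (Nat.factorial j : ℝ) ≤ Real.Gamma (α * n + 1) := by
      calc (Nat.factorial j : ℝ) ≤ (Nat.factorial (Nat.floor (α*n)) : ℝ) := by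
            exact_mod_cast Nat.factorial_le hfl
        _ ≤ _ := gamma_lb hα1
    have hRj : R ^ j ≤ (Nat.factorial j : ℝ) := hJ j (by omega)
    have hnm : n ≤ m * (j + 1) := by
      have hdm : m * j + n % m = n := Nat.div_add_mod n m
      have hmod : n % m < m := Nat.mod_lt n (by omega)
      calc n = m * j + n % m := hdm.symm
        _ ≤ m * j + m := by omega
        _ = m * (j + 1) := by ring
    have h2yn : (2*y) ^ n ≤ R * R ^ j := by
      calc (2*y) ^ n ≤ (2*y) ^ (m * (j+1)) := pow_le_pow_right₀ h2y hnm
        _ = R ^ (j+1) := by rw [hRdef, ← pow_mul]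
        _ = R * R ^ j := by ring
    have hGam_pos : (0:ℝ) < Real.Gamma (α * n + 1) :=
      Real.Gamma_pos_of_pos (by linarith)
    have h2ypos : (0:ℝ) < (2*y)^n := by positivity
    have hGlb : (2*y)^n / R ≤ Real.Gamma (α * n + 1) := by
      rw [div_le_iff₀ (by linarith : (0:ℝ) < R)]
      calc (2*y)^n ≤ R * R^j := h2yn
        _ ≤ R * Real.Gamma (α*n+1) := by nlinarith [le_trans hRj hG]
        _ = Real.Gamma (α*n+1) * R := by ring
    calc x ^ n / Real.Gamma (α * n + 1) ≤ x ^ n / ((2*y)^n / R) :=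
          div_le_div_of_nonneg_left (by positivity) (by positivity) hGlb
      _ = R * (x^n / (2*y)^n) := by field_simp
      _ ≤ R * (1/2)^n := by
          apply mul_le_mul_of_nonneg_left _ (by linarith : (0:ℝ) ≤ R)
          rw [← div_pow]
          apply pow_le_pow_left₀ (by positivity)
          rw [div_le_iff₀ (by linarith : (0:ℝ) < 2*y)]
          linarith
  rw [← summable_nat_add_iff N]
  refine Summable.of_nonneg_of_le (f := fun n => R * (1/2)^(n+N)) ?_ ?_ ?_
  · intro n
    have : (0:ℝ) < Real.Gamma (α * (n+N) + 1) :=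
      Real.Gamma_pos_of_pos (by positivity)
    positivity
  · intro n; exact_mod_cast key (n+N) (by omega)
  · have : Summable (fun n : ℕ => (R * (1/2)^N) * (1/2)^n) :=
      (summable_geometric_of_lt_one (by norm_num) (by norm_num)).mul_left _
    apply this.congr
    intro n
    rw [pow_add]
    ring

lemma beta_real {a b : ℝ} (ha : 0 < a) (hb : 0 < b) :
    ∫ x in (0:ℝ)..1, x ^ (a-1) * (1-x) ^ (b-1)
      = Real.Gamma a * Real.Gamma b / Real.Gamma (a+b) := by
  have hcast : Complex.betaIntegral a b
      = ((∫ x in (0:ℝ)..1, x ^ (a-1) * (1-x) ^ (b-1) : ℝ) : ℂ) := by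
    rw [← intervalIntegral.integral_ofReal, Complex.betaIntegral]
    apply intervalIntegral.integral_congr
    intro x hx
    rw [Set.uIcc_of_le (by norm_num : (0:ℝ) ≤ 1)] at hx
    obtain ⟨h0, h1⟩ := hx
    simp only []
    rw [Complex.ofReal_mul, Complex.ofReal_cpow h0, Complex.ofReal_cpow (by linarith : (0:ℝ) ≤ 1 - x)]
    push_cast
    ring
  have h := Complex.Gamma_mul_Gamma_eq_betaIntegral
    (by simpa using ha : 0 < (a:ℂ).re) (by simpa using hb : 0 < (b:ℂ).re)
  rw [hcast] at h
  have hab : Real.Gamma (a+b) ≠ 0 := (Real.Gamma_pos_of_pos (by linarith)).ne'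
  have h2 : ((Real.Gamma a * Real.Gamma b : ℝ) : ℂ)
      = ((Real.Gamma (a+b) * ∫ x in (0:ℝ)..1, x ^ (a-1) * (1-x) ^ (b-1) : ℝ) : ℂ) := by
    push_cast
    rw [← Complex.Gamma_ofReal, ← Complex.Gamma_ofReal, ← Complex.Gamma_ofReal]
    push_cast
    exact h
  have h3 := Complex.ofReal_inj.mp h2
  field_simp
  linarith [h3]

lemma cont_rpow {β : ℝ} (hβ : 0 ≤ β) : Continuous (fun s : ℝ => s ^ β) :=
  continuous_iff_continuousAt.mpr fun x => Real.continuousAt_rpow_const x β (Or.inr hβ)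

lemma integr {t γ : ℝ} (ht : 0 ≤ t) (hγ : -1 < γ) {g : ℝ → ℝ}
    (hg : ContinuousOn g (Set.Icc 0 t)) :
    IntervalIntegrable (fun s => (t-s) ^ γ * g s) volume 0 t := by
  have h1 : IntervalIntegrable (fun s => (t-s) ^ γ) volume 0 t := by
    have h := (intervalIntegral.intervalIntegrable_rpow' (a := t) (b := 0) hγ).comp_sub_left t
    simpa using h
  apply h1.mul_continuousOn
  rwa [Set.uIcc_of_le ht]


lemma conv_identity {α β t : ℝ} (hα : 0 < α) (hβ : 0 ≤ β) (ht : 0 < t) :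
    ∫ s in (0:ℝ)..t, (t-s) ^ (α-1) * s ^ β
      = t ^ (α+β) * (Real.Gamma (β+1) * Real.Gamma α / Real.Gamma (α+β+1)) := by
  set f : ℝ → ℝ := fun s => (t-s) ^ (α-1) * s ^ β with hf
  have hsub : (∫ x in (0:ℝ)..1, f (t*x)) = t⁻¹ • ∫ s in (0:ℝ)..t, f s := by
    simpa using intervalIntegral.integral_comp_mul_left (a := 0) (b := 1) f (ne_of_gt ht)
  have hcongr : (∫ x in (0:ℝ)..1, f (t*x))
      = ∫ x in (0:ℝ)..1, (t^(α-1) * t^β) * (x ^ ((β+1)-1) * (1-x) ^ (α-1)) := by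
    apply intervalIntegral.integral_congr
    intro x hx
    rw [Set.uIcc_of_le (by norm_num : (0:ℝ) ≤ 1)] at hx
    obtain ⟨h0, h1⟩ := hx
    simp only [hf]
    rw [show t - t*x = t*(1-x) by ring]
    rw [Real.mul_rpow ht.le (by linarith), Real.mul_rpow ht.le h0]
    ring_nf
  have hbeta : (∫ x in (0:ℝ)..1, x ^ ((β+1)-1) * (1-x) ^ (α-1))
      = Real.Gamma (β+1) * Real.Gamma α / Real.Gamma (α+β+1) := by
    rw [beta_real (by linarith) hα]
    ring_nf
  rw [intervalIntegral.integral_const_mul, hbeta] at hcongr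
  rw [hcongr] at hsub
  have : (∫ s in (0:ℝ)..t, f s) = t * (t^(α-1) * t^β *
      (Real.Gamma (β+1) * Real.Gamma α / Real.Gamma (α+β+1))) := by
    rw [smul_eq_mul] at hsub
    field_simp at hsub ⊢
    linarith [hsub]
  rw [this]
  have htpow : t * (t^(α-1) * t^β) = t^(α+β) := by
    rw [← Real.rpow_add ht (α-1) β]
    nth_rewrite 1 [← Real.rpow_one t]
    rw [← Real.rpow_add ht]
    ring_nf
  calc t * (t^(α-1) * t^β * (Real.Gamma (β+1) * Real.Gamma α / Real.Gamma (α+β+1)))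
      = (t * (t^(α-1) * t^β)) * (Real.Gamma (β+1) * Real.Gamma α / Real.Gamma (α+β+1)) := by ring
    _ = _ := by rw [htpow]


lemma gronwall_step {T α C M : ℝ} (hT : 0 < T) (hα0 : 0 < α) (hα1 : α < 1) (hC : 0 ≤ C)
    {Φ : ℝ → ℝ} (hcont : ContinuousOn Φ (Set.Icc 0 T))
    (hineq : ∀ t ∈ Set.Icc (0:ℝ) T,
      Φ t ≤ Φ 0 + (C / Real.Gamma α) * ∫ s in (0:ℝ)..t, (t - s) ^ (α - 1) * Φ s)
    (hΦ0 : 0 ≤ Φ 0) (n : ℕ)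
    (IH : ∀ s ∈ Set.Icc (0:ℝ) T, Φ s ≤
      Φ 0 * (∑ k ∈ Finset.range n, C^k * s^(α*(k:ℝ)) / Real.Gamma (α*(k:ℝ)+1))
        + M * (C^n * s^(α*(n:ℝ)) / Real.Gamma (α*(n:ℝ)+1))) :
    ∀ t ∈ Set.Icc (0:ℝ) T, Φ t ≤
      Φ 0 * (∑ k ∈ Finset.range (n+1), C^k * t^(α*(k:ℝ)) / Real.Gamma (α*(k:ℝ)+1))
        + M * (C^(n+1) * t^(α*((n:ℝ)+1)) / Real.Gamma (α*((n:ℝ)+1)+1)) := by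
  have hΓα : 0 < Real.Gamma α := Real.Gamma_pos_of_pos hα0
  have hΓk : ∀ k : ℕ, 0 < Real.Gamma (α*(k:ℝ)+1) := fun k =>
    Real.Gamma_pos_of_pos (by positivity)
  intro t ht
  obtain ⟨h0t, htT⟩ := ht
  rcases eq_or_lt_of_le h0t with h0t' | h0t'
  · -- t = 0 case
    rw [← h0t']
    rw [Finset.sum_range_succ']
    have hne : ∀ x : ℝ, 0 < x → (0:ℝ)^x = 0 := fun x hx => Real.zero_rpow hx.ne'
    rw [hne _ (by positivity : (0:ℝ) < α*((n:ℝ)+1))]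
    have hsum0 : ∑ k ∈ Finset.range n,
        C^(k+1) * (0:ℝ)^(α*(((k+1:ℕ)):ℝ))/Real.Gamma (α*(((k+1:ℕ)):ℝ)+1) = 0 := by
      apply Finset.sum_eq_zero
      intro k _
      have hp : (0:ℝ) < ((k+1:ℕ):ℝ) := by exact_mod_cast Nat.succ_pos k
      rw [hne _ (by positivity)]
      simp
    rw [hsum0]
    simp [Real.Gamma_one]
  -- t > 0 case
  set a : ℕ → ℝ := fun k => (if k = n then M else Φ 0) * C^k / Real.Gamma (α*(k:ℝ)+1)
    with ha
  have hB : ∀ s ∈ Set.Icc (0:ℝ) t, Φ s ≤ ∑ k ∈ Finset.range (n+1), a k * s^(α*(k:ℝ)) := by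
    intro s hs
    have hs' : s ∈ Set.Icc (0:ℝ) T := ⟨hs.1, le_trans hs.2 htT⟩
    refine le_trans (IH s hs') ?_
    rw [Finset.sum_range_succ]
    have h1 : ∑ k ∈ Finset.range n, a k * s^(α*(k:ℝ))
        = ∑ k ∈ Finset.range n, Φ 0 * (C^k * s^(α*(k:ℝ)) / Real.Gamma (α*(k:ℝ)+1)) := by
      apply Finset.sum_congr rfl
      intro k hk
      have : k ≠ n := Nat.ne_of_lt (Finset.mem_range.mp hk)
      rw [ha]; simp only [if_neg this]; ring
    have han : a n = M * C^n / Real.Gamma (α*(n:ℝ)+1) := by simp [ha]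
    rw [h1, ← Finset.mul_sum, han]
    apply le_of_eq
    ring
  have hcΦ : ContinuousOn Φ (Set.Icc 0 t) :=
    hcont.mono (Set.Icc_subset_Icc le_rfl htT)
  have hαm1 : (-1:ℝ) < α - 1 := by linarith
  have hint1 : IntervalIntegrable (fun s => (t-s)^(α-1) * Φ s) volume 0 t :=
    integr h0t hαm1 hcΦ
  have hintk : ∀ k : ℕ,
      IntervalIntegrable (fun s => a k * ((t-s)^(α-1) * s^(α*(k:ℝ)))) volume 0 t := by
    intro k
    exact (integr h0t hαm1 ((cont_rpow (by positivity)).continuousOn)).const_mul _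
  have hfun : (fun s => (t-s)^(α-1) * (∑ k ∈ Finset.range (n+1), a k * s^(α*(k:ℝ))))
      = fun s => ∑ k ∈ Finset.range (n+1), a k * ((t-s)^(α-1) * s^(α*(k:ℝ))) := by
    funext s
    rw [Finset.mul_sum]
    apply Finset.sum_congr rfl
    intros; ring
  have hint2 : IntervalIntegrable
      (fun s => (t-s)^(α-1) * (∑ k ∈ Finset.range (n+1), a k * s^(α*(k:ℝ)))) volume 0 t := by
    rw [hfun]
    have h := IntervalIntegrable.sum (μ := volume) (a := (0:ℝ)) (b := t)
      (Finset.range (n+1))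
      (f := fun k => fun s => a k * ((t-s)^(α-1) * s^(α*(k:ℝ)))) (fun k _ => hintk k)
    have heq : (∑ k ∈ Finset.range (n+1), fun s => a k * ((t-s)^(α-1) * s^(α*(k:ℝ))))
        = fun s => ∑ k ∈ Finset.range (n+1), a k * ((t-s)^(α-1) * s^(α*(k:ℝ))) :=
      funext fun s => by rw [Finset.sum_apply]
    rwa [heq] at h
  have hmono : (∫ s in (0:ℝ)..t, (t-s)^(α-1) * Φ s)
      ≤ ∫ s in (0:ℝ)..t, (t-s)^(α-1) * (∑ k ∈ Finset.range (n+1), a k * s^(α*(k:ℝ))) := by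
    apply intervalIntegral.integral_mono_on h0t hint1 hint2
    intro s hs
    exact mul_le_mul_of_nonneg_left (hB s hs)
      (Real.rpow_nonneg (by linarith [hs.2]) _)
  have heval : (∫ s in (0:ℝ)..t, (t-s)^(α-1) * (∑ k ∈ Finset.range (n+1), a k * s^(α*(k:ℝ))))
      = ∑ k ∈ Finset.range (n+1), a k * (t^(α+α*(k:ℝ)) *
          (Real.Gamma (α*(k:ℝ)+1) * Real.Gamma α / Real.Gamma (α+α*(k:ℝ)+1))) := by
    rw [hfun, intervalIntegral.integral_finset_sum (fun k _ => hintk k)]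
    apply Finset.sum_congr rfl
    intro k _
    rw [intervalIntegral.integral_const_mul, conv_identity hα0 (by positivity) h0t']
  have step1 := hineq t ⟨h0t, htT⟩
  have step2 : Φ t ≤ Φ 0 + (C / Real.Gamma α) * ∑ k ∈ Finset.range (n+1),
      a k * (t^(α+α*(k:ℝ)) *
        (Real.Gamma (α*(k:ℝ)+1) * Real.Gamma α / Real.Gamma (α+α*(k:ℝ)+1))) := by
    rw [← heval]
    refine le_trans step1 ?_
    have := mul_le_mul_of_nonneg_left hmono (by positivity : (0:ℝ) ≤ C / Real.Gamma α)
    linarith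
  refine le_trans step2 (le_of_eq ?_)
  -- now pure algebra
  have hterm : ∀ k : ℕ, (C / Real.Gamma α) * (a k * (t^(α+α*(k:ℝ)) *
      (Real.Gamma (α*(k:ℝ)+1) * Real.Gamma α / Real.Gamma (α+α*(k:ℝ)+1))))
      = (if k = n then M else Φ 0) *
          (C^(k+1) * t^(α*((k:ℝ)+1)) / Real.Gamma (α*((k:ℝ)+1)+1)) := by
    intro k
    have he : α + α*(k:ℝ) = α*((k:ℝ)+1) := by ring
    rw [ha]
    simp only [he]
    field_simp
    ring
  rw [Finset.mul_sum]
  simp only [hterm]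
  rw [Finset.sum_range_succ, if_pos rfl]
  have hsplit : ∑ k ∈ Finset.range (n+1), C^k * t^(α*(k:ℝ)) / Real.Gamma (α*(k:ℝ)+1)
      = (∑ k ∈ Finset.range n, C^(k+1) * t^(α*((k:ℝ)+1)) / Real.Gamma (α*((k:ℝ)+1)+1)) + 1 := by
    rw [Finset.sum_range_succ']
    congr 1
    · apply Finset.sum_congr rfl
      intro k _
      push_cast
      ring_nf
    · norm_num [Real.Gamma_one]
  rw [hsplit]
  have h2 : ∑ k ∈ Finset.range n,
      (if k = n then M else Φ 0) * (C^(k+1) * t^(α*((k:ℝ)+1)) / Real.Gamma (α*((k:ℝ)+1)+1))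
      = Φ 0 * ∑ k ∈ Finset.range n, C^(k+1) * t^(α*((k:ℝ)+1)) / Real.Gamma (α*((k:ℝ)+1)+1) := by
    rw [Finset.mul_sum]
    apply Finset.sum_congr rfl
    intro k hk
    rw [if_neg (Nat.ne_of_lt (Finset.mem_range.mp hk))]
  rw [h2]
  push_cast
  ring

/-- The one-parameter Mittag-Leffler function `E_α(z) = ∑ z^k / Γ(αk + 1)`. -/
noncomputable def mittagLeffler (α z : ℝ) : ℝ :=
  ∑' k : ℕ, z ^ k / Real.Gamma (α * k + 1)

theorem stmt_12 (T α C : ℝ) (hT : 0 < T) (hα0 : 0 < α) (hα1 : α < 1) (hC : 0 ≤ C)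
    (Φ : ℝ → ℝ) (hcont : ContinuousOn Φ (Set.Icc 0 T))
    (hnonneg : ∀ t ∈ Set.Icc (0:ℝ) T, 0 ≤ Φ t)
    (hineq : ∀ t ∈ Set.Icc (0:ℝ) T,
      Φ t ≤ Φ 0 + (C / Real.Gamma α) * ∫ s in (0:ℝ)..t, (t - s) ^ (α - 1) * Φ s) :
    ∀ t ∈ Set.Icc (0:ℝ) T, Φ t ≤ Φ 0 * mittagLeffler α (C * t ^ α) := by
  have hΦ0 : 0 ≤ Φ 0 := hnonneg 0 ⟨le_rfl, hT.le⟩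
  obtain ⟨z, hz, hmax⟩ := isCompact_Icc.exists_isMaxOn (Set.nonempty_Icc.mpr hT.le) hcont
  set M := Φ z with hMdef
  have hM : ∀ s ∈ Set.Icc (0:ℝ) T, Φ s ≤ M := fun s hs => hmax hs
  have main : ∀ n : ℕ, ∀ s ∈ Set.Icc (0:ℝ) T, Φ s ≤
      Φ 0 * (∑ k ∈ Finset.range n, C^k * s^(α*(k:ℝ)) / Real.Gamma (α*(k:ℝ)+1))
        + M * (C^n * s^(α*(n:ℝ)) / Real.Gamma (α*(n:ℝ)+1)) := by
    intro n
    induction n with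
    | zero =>
      intro s hs
      simpa [Real.Gamma_one] using hM s hs
    | succ n IH =>
      intro s hs
      have h2 := gronwall_step hT hα0 hα1 hC hcont hineq hΦ0 n IH s hs
      push_cast
      exact h2
  intro t ht
  have ht0 : (0:ℝ) ≤ t := ht.1
  have hx : (0:ℝ) ≤ C * t^α := mul_nonneg hC (Real.rpow_nonneg ht0 α)
  have hsum := ml_summable hα0 hx
  have hpow : ∀ k : ℕ, C^k * t^(α*(k:ℝ)) = (C*t^α)^k := by
    intro k
    rw [Real.rpow_mul ht0, Real.rpow_natCast, mul_pow]
  have hΓpos : ∀ k : ℕ, (0:ℝ) < Real.Gamma (α*(k:ℝ)+1) := fun k =>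
    Real.Gamma_pos_of_pos (by positivity)
  have hterm : ∀ n : ℕ, Φ t ≤ Φ 0 * mittagLeffler α (C*t^α)
      + M * ((C*t^α)^n / Real.Gamma (α*(n:ℝ)+1)) := by
    intro n
    have h1 := main n t ht
    rw [hpow n] at h1
    have hpart : ∑ k ∈ Finset.range n, (C*t^α)^k / Real.Gamma (α*(k:ℝ)+1)
        ≤ mittagLeffler α (C*t^α) := by
      apply Summable.sum_le_tsum _ (fun k _ => div_nonneg (pow_nonneg hx k) (hΓpos k).le) hsum
    have h3 : ∑ k ∈ Finset.range n, C^k * t^(α*(k:ℝ)) / Real.Gamma (α*(k:ℝ)+1)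
        = ∑ k ∈ Finset.range n, (C*t^α)^k / Real.Gamma (α*(k:ℝ)+1) := by
      apply Finset.sum_congr rfl
      intro k _
      rw [hpow k]
    rw [h3] at h1
    calc Φ t ≤ Φ 0 * (∑ k ∈ Finset.range n, (C*t^α)^k / Real.Gamma (α*(k:ℝ)+1))
        + M * ((C*t^α)^n / Real.Gamma (α*(n:ℝ)+1)) := h1
      _ ≤ Φ 0 * mittagLeffler α (C*t^α) + M * ((C*t^α)^n / Real.Gamma (α*(n:ℝ)+1)) := by
          have := mul_le_mul_of_nonneg_left hpart hΦ0
          linarith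
  have hlim : Filter.Tendsto (fun n : ℕ => Φ 0 * mittagLeffler α (C*t^α)
      + M * ((C*t^α)^n / Real.Gamma (α*(n:ℝ)+1))) Filter.atTop
      (nhds (Φ 0 * mittagLeffler α (C*t^α) + M * 0)) :=
    Filter.Tendsto.add tendsto_const_nhds
      (Filter.Tendsto.const_mul M hsum.tendsto_atTop_zero)
  have hfin := ge_of_tendsto hlim (Filter.Eventually.of_forall hterm)
  simpa using hfin
end

section
/- Convexity inequality for fractional chain rule (scalar form): let H : ℝ → ℝ be convex and differentiable, 0 < α < 1, and u ∈ C¹([0,T]). Then H'(u(t))·D^α u(t) ≥ D^α (H∘u)(t) for all t ∈ (0,T], where D^α is the left Caputo fractional derivative. -/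
open MeasureTheory intervalIntegral Set Filter Topology


/-- Tangent line inequality for a differentiable convex function. -/
lemma tangent_le {H : ℝ → ℝ} (hconv : ConvexOn ℝ Set.univ H)
    (hdiff : Differentiable ℝ H) (x y : ℝ) :
    H y + deriv H y * (x - y) ≤ H x := by
  rcases lt_trichotomy x y with h | h | h
  · have h1 := hconv.slope_le_of_hasDerivAt (mem_univ x) (mem_univ y) h (hdiff y).hasDerivAt
    rw [slope_def_field] at h1
    have hxy : (0:ℝ) < y - x := by linarith
    rw [div_le_iff₀ hxy] at h1
    linarith
  · simp [h]
  · have h1 := hconv.le_slope_of_hasDerivAt (mem_univ y) (mem_univ x) h (hdiff y).hasDerivAt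
    rw [slope_def_field] at h1
    have hxy : 0 < x - y := by linarith
    rw [le_div_iff₀ hxy] at h1
    linarith

/-- `s ↦ (t-s)^(-α) * g s` is interval integrable on `[0,t]` when `g` is continuous on it. -/
lemma wmul_integrable {t α : ℝ} (ht : 0 < t) (hα0 : 0 < α) (hα1 : α < 1)
    {g : ℝ → ℝ} (hg : ContinuousOn g (Set.Icc 0 t)) :
    IntervalIntegrable (fun s => (t - s) ^ (-α) * g s) volume 0 t := by
  have hw : IntervalIntegrable (fun s : ℝ => (t - s) ^ (-α)) volume 0 t := by
    have h1 : IntervalIntegrable (fun x : ℝ => x ^ (-α)) volume 0 t :=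
      intervalIntegrable_rpow' (by linarith)
    simpa using (h1.comp_sub_left t).symm
  obtain ⟨M, hM⟩ := (isCompact_Icc (a := (0:ℝ)) (b := t)).exists_bound_of_continuousOn hg
  have hMw : IntervalIntegrable (fun s : ℝ => M * (t - s) ^ (-α)) volume 0 t := hw.const_mul M
  refine hMw.mono_fun ?_ ?_
  · have hsub : Set.uIoc (0:ℝ) t ⊆ Set.Icc 0 t := by
      rw [Set.uIoc_of_le ht.le]; exact Ioc_subset_Icc_self
    have hwm : Measurable (fun s : ℝ => (t - s) ^ (-α)) :=
      (measurable_const.sub measurable_id).pow_const _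
    exact hwm.aestronglyMeasurable.mul ((hg.mono hsub).aestronglyMeasurable measurableSet_uIoc)
  · rw [Filter.EventuallyLE]
    filter_upwards [ae_restrict_mem measurableSet_uIoc] with s hs
    rw [Set.uIoc_of_le ht.le] at hs
    have hts : (0:ℝ) ≤ t - s := by linarith [hs.2]
    have hw0 : (0:ℝ) ≤ (t - s) ^ (-α) := Real.rpow_nonneg hts _
    have hgs : |g s| ≤ M := hM s ⟨hs.1.le, hs.2⟩
    have hM0 : 0 ≤ M := le_trans (abs_nonneg _) hgs
    simp only [Real.norm_eq_abs, abs_mul]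
    rw [abs_of_nonneg hw0, abs_of_nonneg hM0, mul_comm M]
    exact mul_le_mul_of_nonneg_left hgs hw0

/-- Key inequality: if `F ≥ 0` on `[0,t]`, `F t = 0`, `F' = f` with `f` continuous and `f t = 0`,
then `∫₀ᵗ (t-s)^(-α) f s ds ≤ 0`. -/
lemma key_ineq {t α : ℝ} (ht : 0 < t) (hα0 : 0 < α) (hα1 : α < 1)
    {F f : ℝ → ℝ}
    (hF : ∀ s ∈ Set.Icc 0 t, HasDerivWithinAt F (f s) (Set.Icc 0 t) s)
    (hfc : ContinuousOn f (Set.Icc 0 t))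
    (hF0 : ∀ s ∈ Set.Icc 0 t, 0 ≤ F s)
    (hFt : F t = 0) (hft : f t = 0) :
    ∫ s in (0:ℝ)..t, (t - s) ^ (-α) * f s ≤ 0 := by
  set w : ℝ → ℝ := fun s => (t - s) ^ (-α) with hw
  have hwf_int : IntervalIntegrable (fun s => w s * f s) volume 0 t :=
    wmul_integrable ht hα0 hα1 hfc
  have hFc : ContinuousOn F (Set.Icc 0 t) := fun s hs => (hF s hs).continuousWithinAt
  -- step 1: for each b ∈ (0,t), the bound
  have keyb : ∀ b ∈ Set.Ioo (0:ℝ) t,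
      (∫ s in (0:ℝ)..t, w s * f s) ≤ (t - b) ^ (-α) * F b + ∫ s in b..t, w s * f s := by
    intro b hb
    have hb0 := hb.1
    have hbt := hb.2
    have hsub1 : Set.uIcc (0:ℝ) b ⊆ Set.uIcc (0:ℝ) t := by
      rw [Set.uIcc_of_le hb0.le, Set.uIcc_of_le ht.le]
      exact Set.Icc_subset_Icc le_rfl hbt.le
    have hsub2 : Set.uIcc b t ⊆ Set.uIcc (0:ℝ) t := by
      rw [Set.uIcc_of_le hbt.le, Set.uIcc_of_le ht.le]
      exact Set.Icc_subset_Icc hb0.le le_rfl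
    have h1 : IntervalIntegrable (fun s => w s * f s) volume 0 b := hwf_int.mono_set hsub1
    have h2 : IntervalIntegrable (fun s => w s * f s) volume b t := hwf_int.mono_set hsub2
    have hsplit : (∫ s in (0:ℝ)..t, w s * f s)
        = (∫ s in (0:ℝ)..b, w s * f s) + ∫ s in b..t, w s * f s :=
      (intervalIntegral.integral_add_adjacent_intervals h1 h2).symm
    -- continuity of w and w' on [0,b]
    have hwne : ∀ s ∈ Set.Icc (0:ℝ) b, t - s ≠ 0 := fun s hs => by
      have := hs.2; intro h; nlinarith [hs.1]
    have hwcont : ContinuousOn w (Set.Icc 0 b) :=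
      ((continuousOn_const.sub continuousOn_id).rpow_const (fun s hs => Or.inl (hwne s hs)))
    have hw'cont : ContinuousOn (fun s => α * (t - s) ^ (-α - 1)) (Set.Icc 0 b) :=
      continuousOn_const.mul
        ((continuousOn_const.sub continuousOn_id).rpow_const (fun s hs => Or.inl (hwne s hs)))
    have hIccb : Set.Icc (0:ℝ) b ⊆ Set.Icc 0 t := Set.Icc_subset_Icc le_rfl hbt.le
    -- integration by parts via FTC on the product
    have hP : ∀ x ∈ Set.Ioo (0:ℝ) b,
        HasDerivWithinAt (fun s => w s * F s)
          ((α * (t - x) ^ (-α - 1)) * F x + w x * f x) (Set.Ioi x) x := by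
      intro x hx
      have hx1 : t - x ≠ 0 := by have := hx.2; intro h; nlinarith [hx.1]
      have hd1 : HasDerivAt (fun y : ℝ => y ^ (-α)) (-α * (t - x) ^ (-α - 1)) (t - x) :=
        Real.hasDerivAt_rpow_const (Or.inl hx1)
      have hd2 : HasDerivAt (fun s : ℝ => t - s) (-1) x := by
        simpa using (hasDerivAt_id x).const_sub t
      have hdw : HasDerivAt w (α * (t - x) ^ (-α - 1)) x := by
        have := hd1.comp x hd2
        exact this.congr_deriv (by ring)
      have hFx : HasDerivWithinAt F (f x) (Set.Ioi x) x := by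
        refine (hF x (hIccb (Set.Ioo_subset_Icc_self hx))).mono_of_mem_nhdsWithin ?_
        refine mem_nhdsWithin.2 ⟨Set.Iio t, isOpen_Iio, by exact lt_trans hx.2 hbt, ?_⟩
        intro y hy
        exact ⟨le_trans hx.1.le (le_of_lt hy.2), hy.1.le⟩
      exact hdw.hasDerivWithinAt.mul hFx
    have hPcont : ContinuousOn (fun s => w s * F s) (Set.Icc 0 b) :=
      hwcont.mul (hFc.mono hIccb)
    have hint1 : IntervalIntegrable (fun s => (α * (t - s) ^ (-α - 1)) * F s) volume 0 b :=
      (hw'cont.mul (hFc.mono hIccb)).intervalIntegrable_of_Icc hb0.le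
    have hint2 : IntervalIntegrable (fun s => w s * f s) volume 0 b :=
      (hwcont.mul (hfc.mono hIccb)).intervalIntegrable_of_Icc hb0.le
    have hFTC : (∫ s in (0:ℝ)..b, ((α * (t - s) ^ (-α - 1)) * F s + w s * f s))
        = w b * F b - w 0 * F 0 := by
      exact intervalIntegral.integral_eq_sub_of_hasDeriv_right_of_le hb0.le hPcont hP
        (hint1.add hint2)
    rw [intervalIntegral.integral_add hint1 hint2] at hFTC
    have hnn1 : 0 ≤ ∫ s in (0:ℝ)..b, (α * (t - s) ^ (-α - 1)) * F s := by
      apply intervalIntegral.integral_nonneg hb0.le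
      intro s hs
      have : (0:ℝ) ≤ t - s := by have := hs.2; linarith
      exact mul_nonneg (mul_nonneg hα0.le (Real.rpow_nonneg this _))
        (hF0 s (hIccb hs))
    have hnn2 : 0 ≤ w 0 * F 0 := by
      apply mul_nonneg (Real.rpow_nonneg (by linarith) _)
        (hF0 0 ⟨le_rfl, ht.le⟩)
    have : (∫ s in (0:ℝ)..b, w s * f s) ≤ w b * F b := by linarith
    rw [hsplit]
    have : w b = (t - b) ^ (-α) := rfl
    linarith
  -- step 2: the bound tends to 0 as b → t⁻
  have htend : Filter.Tendsto
      (fun b => (t - b) ^ (-α) * F b + ∫ s in b..t, w s * f s) (𝓝[<] t) (𝓝 0) := by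
    have hA : Filter.Tendsto (fun b => (t - b) ^ (-α) * F b) (𝓝[<] t) (𝓝 0) := by
      have hslope : Filter.Tendsto (slope F t) (𝓝[<] t) (𝓝 0) := by
        have h1 := hasDerivWithinAt_iff_tendsto_slope.1 (hF t ⟨ht.le, le_rfl⟩)
        rw [hft] at h1
        refine h1.mono_left ?_
        rw [← nhdsWithin_Ioo_eq_nhdsLT ht]
        exact nhdsWithin_mono t (fun y hy => ⟨⟨hy.1.le, hy.2.le⟩, ne_of_lt hy.2⟩)
      have hpow : Filter.Tendsto (fun b => (t - b) ^ (1 - α)) (𝓝[<] t) (𝓝 0) := by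
        have h1 : Filter.Tendsto (fun b : ℝ => t - b) (𝓝[<] t) (𝓝 0) := by
          have h0 : Filter.Tendsto (fun b : ℝ => t - b) (𝓝 t) (𝓝 (t - t)) :=
            tendsto_const_nhds.sub tendsto_id
          rw [sub_self] at h0
          exact h0.mono_left nhdsWithin_le_nhds
        have h2 : ContinuousAt (fun x : ℝ => x ^ (1 - α)) 0 :=
          Real.continuousAt_rpow_const 0 (1 - α) (Or.inr (by linarith))
        have := h2.tendsto.comp h1
        rwa [Real.zero_rpow (by linarith : (1:ℝ) - α ≠ 0)] at this
      have hmul := (hslope.neg).mul hpow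
      rw [neg_zero, zero_mul] at hmul
      refine hmul.congr' ?_
      filter_upwards [self_mem_nhdsWithin] with b (hb : b < t)
      have htb : (0:ℝ) < t - b := by linarith
      have h3 : (t - b) ^ (1 - α) = (t - b) * (t - b) ^ (-α) := by
        rw [show (1:ℝ) - α = 1 + (-α) by ring, Real.rpow_add htb, Real.rpow_one]
      have hne : t - b ≠ 0 := htb.ne'
      rw [slope_def_field, hFt, h3, sub_zero, show b - t = -(t - b) by ring, div_neg,
        neg_neg, ← mul_assoc, div_mul_cancel₀ _ hne, mul_comm]
    have hB : Filter.Tendsto (fun b => ∫ s in b..t, w s * f s) (𝓝[<] t) (𝓝 0) := by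
      have hint : IntegrableOn (fun s => w s * f s) (Set.uIcc 0 t) volume := by
        rw [Set.uIcc_of_le ht.le]
        exact (intervalIntegrable_iff_integrableOn_Icc_of_le ht.le).1 hwf_int
      have hcontP := intervalIntegral.continuousOn_primitive_interval (a := 0) (b := t)
        (μ := volume) hint
      rw [Set.uIcc_of_le ht.le] at hcontP
      have h1 : Filter.Tendsto (fun b => ∫ s in (0:ℝ)..b, w s * f s) (𝓝[<] t)
          (𝓝 (∫ s in (0:ℝ)..t, w s * f s)) := by
        have := (hcontP t ⟨ht.le, le_rfl⟩).tendsto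
        refine this.mono_left ?_
        rw [← nhdsWithin_Ioo_eq_nhdsLT ht]
        exact nhdsWithin_mono t (fun y hy => ⟨hy.1.le, hy.2.le⟩)
      have h2 := (tendsto_const_nhds (x := ∫ s in (0:ℝ)..t, w s * f s)
        (f := 𝓝[<] t)).sub h1
      rw [sub_self] at h2
      refine h2.congr' ?_
      filter_upwards [Ioo_mem_nhdsLT_of_mem (Set.right_mem_Ioc.2 ht)] with b hb
      have hsub1 : Set.uIcc (0:ℝ) b ⊆ Set.uIcc (0:ℝ) t := by
        rw [Set.uIcc_of_le hb.1.le, Set.uIcc_of_le ht.le]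
        exact Set.Icc_subset_Icc le_rfl hb.2.le
      have hsub2 : Set.uIcc b t ⊆ Set.uIcc (0:ℝ) t := by
        rw [Set.uIcc_of_le hb.2.le, Set.uIcc_of_le ht.le]
        exact Set.Icc_subset_Icc hb.1.le le_rfl
      rw [sub_eq_iff_eq_add, add_comm]
      exact (intervalIntegral.integral_add_adjacent_intervals
        (hwf_int.mono_set hsub1) (hwf_int.mono_set hsub2)).symm
    have := hA.add hB
    rwa [add_zero] at this
  have final : (∫ s in (0:ℝ)..t, w s * f s) ≤ 0 :=
    ge_of_tendsto htend
      (Filter.eventually_of_mem (Ioo_mem_nhdsLT_of_mem (Set.right_mem_Ioc.2 ht)) keyb)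
  exact final

theorem stmt_16 (T α : ℝ) (hT : 0 < T) (hα0 : 0 < α) (hα1 : α < 1)
    (H : ℝ → ℝ) (hconv : ConvexOn ℝ Set.univ H)
    (hdiff : Differentiable ℝ H) (hderiv : Continuous (deriv H))
    (u : ℝ → ℝ) (hu : ContDiffOn ℝ 1 u (Set.Icc 0 T)) :
    ∀ t ∈ Set.Ioc (0:ℝ) T,
      caputo α (fun s => H (u s)) t ≤ deriv H (u t) * caputo α u t := by
  intro t ht
  obtain ⟨ht0, htT⟩ := ht
  have h1α : (0:ℝ) < 1 - α := by linarith
  have hΓ : 0 < Real.Gamma (1 - α) := Real.Gamma_pos_of_pos h1α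
  have hc0 : (0:ℝ) < 1 / Real.Gamma (1 - α) := by positivity
  have hut : ContDiffOn ℝ 1 u (Set.Icc 0 t) := hu.mono (Set.Icc_subset_Icc le_rfl htT)
  set v : ℝ → ℝ := fun s => derivWithin u (Set.Icc 0 t) s with hv
  have hvc : ContinuousOn v (Set.Icc 0 t) :=
    hut.continuousOn_derivWithin (uniqueDiffOn_Icc ht0) le_rfl
  have huv : ∀ s ∈ Set.Icc (0:ℝ) t, HasDerivWithinAt u (v s) (Set.Icc 0 t) s := fun s hs =>
    ((hut.differentiableOn one_ne_zero) s hs).hasDerivWithinAt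
  set c : ℝ := deriv H (u t) with hcdef
  set F : ℝ → ℝ := fun s => (c * u t - H (u t)) - (c * u s - H (u s)) with hFdef
  set f : ℝ → ℝ := fun s => deriv H (u s) * v s - c * v s with hfdef
  have hF : ∀ s ∈ Set.Icc (0:ℝ) t, HasDerivWithinAt F (f s) (Set.Icc 0 t) s := by
    intro s hs
    have h1 : HasDerivWithinAt (fun s => H (u s)) (deriv H (u s) * v s) (Set.Icc 0 t) s :=
      (hdiff (u s)).hasDerivAt.comp_hasDerivWithinAt s (huv s hs)
    have h2 := (((huv s hs).const_mul c).sub h1).const_sub (c * u t - H (u t))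
    exact h2.congr_deriv (by simp only [hfdef]; ring)
  have hfc : ContinuousOn f (Set.Icc 0 t) :=
    ((hderiv.comp_continuousOn hut.continuousOn).mul hvc).sub (continuousOn_const.mul hvc)
  have hF0 : ∀ s ∈ Set.Icc (0:ℝ) t, 0 ≤ F s := by
    intro s hs
    have htan := tangent_le hconv hdiff (u s) (u t)
    simp only [hFdef, hcdef]
    linarith [htan, mul_sub (deriv H (u t)) (u s) (u t)]
  have hFt : F t = 0 := sub_self _
  have hft : f t = 0 := sub_self _
  have K := key_ineq ht0 hα0 hα1 hF hfc hF0 hFt hft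
  have hint1 : IntervalIntegrable (fun s => (t - s) ^ (-α) * (deriv H (u s) * v s)) volume 0 t :=
    wmul_integrable ht0 hα0 hα1 ((hderiv.comp_continuousOn hut.continuousOn).mul hvc)
  have hint2 : IntervalIntegrable (fun s => (t - s) ^ (-α) * (c * v s)) volume 0 t :=
    wmul_integrable ht0 hα0 hα1 (continuousOn_const.mul hvc)
  simp only [hfdef, mul_sub] at K
  rw [intervalIntegral.integral_sub hint1 hint2] at K
  -- a.e. rewriting of the caputo integrands
  have haet : ∀ᵐ x : ℝ, x ∉ ({t} : Set ℝ) :=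
    (MeasureTheory.measure_eq_zero_iff_ae_notMem).1 (measure_singleton t)
  have hinterior : ∀ x ∈ Set.Ioo (0:ℝ) t,
      DifferentiableAt ℝ u x ∧ deriv u x = v x := by
    intro x hx
    have hnbT : Set.Icc (0:ℝ) T ∈ 𝓝 x := Icc_mem_nhds hx.1 (lt_of_lt_of_le hx.2 htT)
    have hnbt : Set.Icc (0:ℝ) t ∈ 𝓝 x := Icc_mem_nhds hx.1 hx.2
    have hud : DifferentiableAt ℝ u x :=
      ((hu.differentiableOn one_ne_zero) x ⟨hx.1.le, le_trans hx.2.le htT⟩).differentiableAt hnbT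
    exact ⟨hud, (derivWithin_of_mem_nhds hnbt).symm⟩
  have e1 : (∫ s in (0:ℝ)..t, (t - s) ^ (-α) * deriv (fun s => H (u s)) s)
      = ∫ s in (0:ℝ)..t, (t - s) ^ (-α) * (deriv H (u s) * v s) := by
    apply intervalIntegral.integral_congr_ae
    filter_upwards [haet] with x hx hmem
    rw [Set.uIoc_of_le ht0.le] at hmem
    have hxo : x ∈ Set.Ioo (0:ℝ) t := ⟨hmem.1, lt_of_le_of_ne hmem.2 hx⟩
    obtain ⟨hud, hdv⟩ := hinterior x hxo
    have hcomp : deriv (fun s => H (u s)) x = deriv H (u x) * deriv u x := by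
      rw [show (fun s => H (u s)) = H ∘ u from rfl]
      exact deriv_comp x (hdiff (u x)) hud
    rw [hcomp, hdv]
  have e2 : (∫ s in (0:ℝ)..t, (t - s) ^ (-α) * deriv u s)
      = ∫ s in (0:ℝ)..t, (t - s) ^ (-α) * v s := by
    apply intervalIntegral.integral_congr_ae
    filter_upwards [haet] with x hx hmem
    rw [Set.uIoc_of_le ht0.le] at hmem
    have hxo : x ∈ Set.Ioo (0:ℝ) t := ⟨hmem.1, lt_of_le_of_ne hmem.2 hx⟩
    obtain ⟨_, hdv⟩ := hinterior x hxo
    rw [hdv]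
  have e3 : (∫ s in (0:ℝ)..t, (t - s) ^ (-α) * (c * v s))
      = c * ∫ s in (0:ℝ)..t, (t - s) ^ (-α) * v s := by
    rw [← intervalIntegral.integral_const_mul]
    apply intervalIntegral.integral_congr
    intro x _
    ring
  show (1 / Real.Gamma (1 - α)) * (∫ s in (0:ℝ)..t, (t - s) ^ (-α) * deriv (fun s => H (u s)) s)
      ≤ c * ((1 / Real.Gamma (1 - α)) * ∫ s in (0:ℝ)..t, (t - s) ^ (-α) * deriv u s)
  rw [e1, e2]
  have hle : (∫ s in (0:ℝ)..t, (t - s) ^ (-α) * (deriv H (u s) * v s))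
      ≤ c * ∫ s in (0:ℝ)..t, (t - s) ^ (-α) * v s := by
    rw [← e3]; linarith
  calc (1 / Real.Gamma (1 - α)) * ∫ s in (0:ℝ)..t, (t - s) ^ (-α) * (deriv H (u s) * v s)
      ≤ (1 / Real.Gamma (1 - α)) * (c * ∫ s in (0:ℝ)..t, (t - s) ^ (-α) * v s) :=
        mul_le_mul_of_nonneg_left hle hc0.le
    _ = c * ((1 / Real.Gamma (1 - α)) * ∫ s in (0:ℝ)..t, (t - s) ^ (-α) * v s) := by ring
end
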